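/- Let A be an invertible (n+1)×(n+1) real matrix and K ≥ 1. Regard the box B = [-1,1]^n as a subset of projective space RP^n via the affine chart x ↦ [x:1]. If the projective transformation [A] maps B into K·B = [-K,K]^n, then for all indices i, j one has |A_{ij}| ≤ 2K·|A_{n+1,n+1}|. -/

import Mathlib

private lemma abs_sum_helper (a c : ℝ) (h : |a| ≤ |c|) :
    |c + a| + |c - a| ≤ 2 * |c| := by
  rcases abs_cases (c + a) with ⟨h1, _⟩ | ⟨h1, _⟩ <;>
  rcases abs_cases (c - a) with ⟨h2, _⟩ | ⟨h2, _⟩ <;>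
  rcases abs_cases c with ⟨h3, _⟩ | ⟨h3, _⟩ <;>
  rcases abs_cases a with ⟨h4, _⟩ | ⟨h4, _⟩ <;> linarith

/-- **Box estimate.** If `A` is an invertible `(n+1)×(n+1)` real matrix, `K ≥ 1`, and the
projective transformation `[A]` maps the affine box `[-1,1]^n ⊂ RP^n` (affine chart
`x ↦ [x : 1]`) into `[-K,K]^n`, then every entry of `A` satisfies
`|A i j| ≤ 2K·|A (last) (last)|`. -/
theorem box_estimate (n : ℕ) (A : Matrix (Fin (n+1)) (Fin (n+1)) ℝ)
    (hA : IsUnit A.det) (K : ℝ) (hK : 1 ≤ K)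
    (hbox : ∀ x : Fin n → ℝ, (∀ i, |x i| ≤ 1) →
      A.mulVec (Fin.snoc x 1) (Fin.last n) ≠ 0 ∧
      ∀ i : Fin n, |A.mulVec (Fin.snoc x 1) i.castSucc /
        A.mulVec (Fin.snoc x 1) (Fin.last n)| ≤ K) :
    ∀ i j : Fin (n+1), |A i j| ≤ 2 * K * |A (Fin.last n) (Fin.last n)| := by
  have hmv : ∀ (x : Fin n → ℝ) (i : Fin (n+1)),
      A.mulVec (Fin.snoc x 1) i
        = (∑ k : Fin n, A i k.castSucc * x k) + A i (Fin.last n) := by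
    intro x i
    simp [Matrix.mulVec, dotProduct, Fin.sum_univ_castSucc]
  have hv : ∀ (t : ℝ) (j : Fin n) (i : Fin (n+1)),
      A.mulVec (Fin.snoc (fun k => if k = j then t else 0) 1) i
        = t * A i j.castSucc + A i (Fin.last n) := by
    intro t j i
    rw [hmv]
    simp [mul_ite, Finset.sum_ite_eq', mul_comm]
  have hbx : ∀ (t : ℝ), |t| ≤ 1 → ∀ (j k : Fin n),
      |(if k = j then t else 0 : ℝ)| ≤ 1 := by
    intro t ht j k; split <;> simp [ht]
  set c := A (Fin.last n) (Fin.last n) with hcdef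
  have hc0 : c ≠ 0 := by
    have h := (hbox (fun _ => 0) (by intro k; simp)).1
    rw [hmv] at h; simpa using h
  have hKpos : (0:ℝ) < K := lt_of_lt_of_le one_pos hK
  -- last-row bound
  have hrow : ∀ j : Fin n, |A (Fin.last n) j.castSucc| ≤ |c| := by
    intro j
    by_contra h
    push_neg at h
    set a := A (Fin.last n) j.castSucc with hadef
    have ha : a ≠ 0 := by
      intro h0; rw [h0] at h; simp at h
      exact absurd h (not_lt.mpr (abs_nonneg c))
    have ht : |(-c / a)| ≤ 1 := by
      rw [abs_div, abs_neg, div_le_one (abs_pos.mpr ha)]; linarith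
    have hz := (hbox (fun k => if k = j then -c / a else 0) (hbx _ ht j)).1
    rw [hv] at hz
    apply hz
    field_simp
    rw [← hadef, ← hcdef]; ring
  -- numerator bound
  have hnum : ∀ (x : Fin n → ℝ), (∀ k, |x k| ≤ 1) → ∀ i : Fin n,
      |A.mulVec (Fin.snoc x 1) i.castSucc|
        ≤ K * |A.mulVec (Fin.snoc x 1) (Fin.last n)| := by
    intro x hx i
    obtain ⟨hd, hq⟩ := hbox x hx
    have h := hq i
    rw [abs_div, div_le_iff₀ (abs_pos.mpr hd)] at h
    linarith
  intro i j
  induction i using Fin.lastCases with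
  | last =>
    induction j using Fin.lastCases with
    | last =>
      nlinarith [abs_nonneg c]
    | cast j' =>
      have := hrow j'
      nlinarith [abs_nonneg c]
  | cast i' =>
    induction j using Fin.lastCases with
    | last =>
      have h0 := hnum (fun _ => 0) (by intro k; simp) i'
      rw [hmv, hmv] at h0
      simp only [mul_zero, Finset.sum_const_zero, zero_add] at h0
      nlinarith [abs_nonneg (A i'.castSucc (Fin.last n)), abs_nonneg c]
    | cast j' =>
      set a := A (Fin.last n) j'.castSucc with hadef
      set b := A i'.castSucc j'.castSucc with hbdef
      set m := A i'.castSucc (Fin.last n) with hmdef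
      have h1 := hnum (fun k => if k = j' then 1 else 0)
        (hbx 1 (by norm_num) j') i'
      have h2 := hnum (fun k => if k = j' then (-1:ℝ) else 0)
        (hbx (-1) (by norm_num) j') i'
      simp only [hv, one_mul, neg_one_mul] at h1 h2
      rw [← hadef, ← hbdef, ← hmdef, ← hcdef] at h1 h2
      rw [show a + c = c + a from by ring] at h1
      rw [show -a + c = c - a from by ring] at h2
      have key := abs_sum_helper a c (hrow j')
      have h3 : 2 * |b| ≤ |b + m| + |-b + m| := by
        have habs := abs_add_le (b + m) (-(-b + m))
        rw [abs_neg] at habs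
        rw [show (b + m) + (-(-b + m)) = 2 * b from by ring] at habs
        calc 2 * |b| = |2 * b| := by rw [abs_mul, abs_two]
          _ ≤ _ := habs
      have hkey' := mul_le_mul_of_nonneg_left key (le_of_lt hKpos)
      nlinarith [abs_nonneg c]
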